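/- arXiv:2309.07299 — 3 statements merged into one kernel-verified Lean document; each statement's English description precedes it below -/
import Mathlib

section
/- For a point uniformly distributed on the ellipse {(x,y) : x²/a² + y²/b² ≤ 1} with 0 < b ≤ a, the radial distance r = √(x²+y²) from the center has probability density f_r(r) = 2r/(ab) for 0 ≤ r ≤ b and f_r(r) = (4r/(πab))·arccos(√(r² − b²)/(ℰ r)) for b < r ≤ a, where ℰ = √(1 − b²/a²); in particular this density integrates to 1 over [0, a]. -/
open Real MeasureTheory Set
open scoped ENNReal

lemma aux_cos_ge_iff {c θ : ℝ} (hc0 : 0 ≤ c) (hc1 : c ≤ 1) (h0 : 0 ≤ θ) (h1 : θ ≤ π) :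
    c ≤ Real.cos θ ↔ θ ≤ Real.arccos c := by
  have hmem1 : c ∈ Icc (-1:ℝ) 1 := ⟨by linarith, hc1⟩
  have hmem2 : Real.cos θ ∈ Icc (-1:ℝ) 1 := ⟨Real.neg_one_le_cos θ, Real.cos_le_one θ⟩
  have h := Real.strictAntiOn_arccos.le_iff_ge hmem2 hmem1
  rw [Real.arccos_cos h0 h1] at h
  exact h.symm

lemma aux_cos_le_iff {c θ : ℝ} (hc0 : 0 ≤ c) (hc1 : c ≤ 1) (h0 : 0 ≤ θ) (h1 : θ ≤ π) :
    Real.cos θ ≤ -c ↔ π - Real.arccos c ≤ θ := by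
  have hA0 : 0 ≤ Real.arccos c := Real.arccos_nonneg c
  have hAp : Real.arccos c ≤ π := Real.arccos_le_pi c
  have hmem1 : Real.cos θ ∈ Icc (-1:ℝ) 1 := ⟨Real.neg_one_le_cos θ, Real.cos_le_one θ⟩
  have hc : Real.cos (π - Real.arccos c) = -c := by
    rw [Real.cos_pi_sub, Real.cos_arccos (by linarith) hc1]
  have hmem2 : Real.cos (π - Real.arccos c) ∈ Icc (-1:ℝ) 1 := by
    rw [hc]; exact ⟨by linarith, by linarith⟩
  have h := Real.strictAntiOn_arccos.le_iff_ge hmem2 hmem1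
  rw [Real.arccos_cos h0 h1, Real.arccos_cos (by linarith) (by linarith)] at h
  rw [← hc]
  exact h.symm

lemma aux_measure_cos_set {c : ℝ} (hc0 : 0 < c) (hc1 : c ≤ 1) :
    volume {θ : ℝ | θ ∈ Ioo (-π) π ∧ c ≤ |Real.cos θ|} =
      ENNReal.ofReal (4 * Real.arccos c) := by
  set A := Real.arccos c with hA
  have hA0 : 0 ≤ A := Real.arccos_nonneg c
  have hA2 : A < π / 2 := Real.arccos_lt_pi_div_two.2 hc0
  have hπ : 0 < π := Real.pi_pos
  have hset : {θ : ℝ | θ ∈ Ioo (-π) π ∧ c ≤ |Real.cos θ|}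
      = Ioc (-π) (-(π - A)) ∪ Icc (-A) A ∪ Ico (π - A) π := by
    ext θ
    simp only [mem_setOf_eq, mem_Ioo, mem_union, mem_Ioc, mem_Icc, mem_Ico]
    constructor
    · rintro ⟨⟨h1, h2⟩, h3⟩
      rw [le_abs] at h3
      rcases le_or_gt 0 θ with h0 | h0
      · rcases h3 with h3 | h3
        · have := (aux_cos_ge_iff hc0.le hc1 h0 h2.le).1 h3
          exact Or.inl (Or.inr ⟨by linarith, this⟩)
        · have := (aux_cos_le_iff hc0.le hc1 h0 h2.le).1 (by linarith)
          exact Or.inr ⟨this, h2⟩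
      · have h0' : (0:ℝ) ≤ -θ := by linarith
        have h2' : -θ ≤ π := by linarith
        rcases h3 with h3 | h3
        · have := (aux_cos_ge_iff hc0.le hc1 h0' h2').1 (by rwa [Real.cos_neg])
          exact Or.inl (Or.inr ⟨by linarith, by linarith⟩)
        · have := (aux_cos_le_iff hc0.le hc1 h0' h2').1 (by rw [Real.cos_neg]; linarith)
          exact Or.inl (Or.inl ⟨h1, by linarith⟩)
    · rintro ((⟨h1, h2⟩ | ⟨h1, h2⟩) | ⟨h1, h2⟩)
      · have h0' : (0:ℝ) ≤ -θ := by linarith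
        have h2' : -θ ≤ π := by linarith
        have := (aux_cos_le_iff hc0.le hc1 h0' h2').2 (by linarith)
        rw [Real.cos_neg] at this
        exact ⟨⟨h1, by linarith⟩, le_abs.2 (Or.inr (by linarith))⟩
      · have habs : |θ| ≤ A := abs_le.2 ⟨h1, h2⟩
        have := (aux_cos_ge_iff hc0.le hc1 (abs_nonneg θ) (by linarith [abs_le.1 habs])).2 habs
        rw [Real.cos_abs] at this
        exact ⟨⟨by cases abs_le.1 habs with | intro l r => linarith,
          by cases abs_le.1 habs with | intro l r => linarith⟩, le_abs.2 (Or.inl this)⟩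
      · have := (aux_cos_le_iff hc0.le hc1 (by linarith) h2.le).2 h1
        exact ⟨⟨by linarith, h2⟩, le_abs.2 (Or.inr (by linarith))⟩
  have d1 : Disjoint (Ioc (-π) (-(π - A))) (Icc (-A) A) := by
    rw [Set.disjoint_left]; rintro x ⟨_, h2⟩ ⟨h3, _⟩; linarith
  have d2 : Disjoint (Ioc (-π) (-(π - A)) ∪ Icc (-A) A) (Ico (π - A) π) := by
    rw [Set.disjoint_left]; rintro x (⟨_, h2⟩ | ⟨_, h2⟩) ⟨h3, _⟩ <;> linarith
  rw [hset, measure_union d2 measurableSet_Ico, measure_union d1 measurableSet_Icc,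
    Real.volume_Ioc, Real.volume_Icc, Real.volume_Ico,
    ← ENNReal.ofReal_add (by linarith) (by linarith),
    ← ENNReal.ofReal_add (by linarith) (by linarith)]
  congr 1; ring

lemma aux_lintegral_polar (g : ℝ × ℝ → ℝ≥0∞) :
    ∫⁻ p, g p = ∫⁻ p in polarCoord.target, ENNReal.ofReal p.1 * g (polarCoord.symm p) := by
  set B : ℝ × ℝ → ℝ × ℝ →L[ℝ] ℝ × ℝ := fun p =>
    LinearMap.toContinuousLinearMap (Matrix.toLin (Module.Basis.finTwoProd ℝ) (Module.Basis.finTwoProd ℝ)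
      !![Real.cos p.2, -p.1 * Real.sin p.2; Real.sin p.2, p.1 * Real.cos p.2]) with hB
  have hder : ∀ p ∈ polarCoord.target, HasFDerivWithinAt polarCoord.symm (B p)
      polarCoord.target p := fun p _ => (hasFDerivAt_polarCoord_symm p).hasFDerivWithinAt
  have B_det : ∀ p, (B p).det = p.1 := by
    intro p
    conv_rhs => rw [← one_mul p.1, ← Real.cos_sq_add_sin_sq p.2]
    simp only [hB, neg_mul, LinearMap.det_toContinuousLinearMap, LinearMap.det_toLin,
      Matrix.det_fin_two_of, sub_neg_eq_add]
    ring
  have hinj : Set.InjOn polarCoord.symm polarCoord.target := by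
    have := polarCoord.symm.injOn
    rwa [OpenPartialHomeomorph.symm_source] at this
  have h := lintegral_image_eq_lintegral_abs_det_fderiv_mul volume
    polarCoord.open_target.measurableSet hder hinj g
  rw [polarCoord.symm_image_target_eq_source] at h
  rw [← setLIntegral_univ (μ := volume) g,
    ← Measure.restrict_congr_set polarCoord_source_ae_eq_univ, h]
  refine setLIntegral_congr_fun_ae polarCoord.open_target.measurableSet
    (Filter.Eventually.of_forall fun p hp => ?_)
  rw [B_det, abs_of_pos]
  exact hp.1

lemma aux_volume_ellipse {a b : ℝ} (ha : 0 < a) (hb : 0 < b) :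
    volume {p : ℝ × ℝ | p.1^2 / a^2 + p.2^2 / b^2 ≤ 1} = ENNReal.ofReal (π * a * b) := by
  set L : ℝ × ℝ →ₗ[ℝ] ℝ × ℝ :=
    Matrix.toLin (Module.Basis.finTwoProd ℝ) (Module.Basis.finTwoProd ℝ) !![a, 0; 0, b] with hL
  have hLapp : ∀ x : ℝ × ℝ, L x = (a * x.1, b * x.2) := by
    intro x
    rw [hL, Matrix.toLin_finTwoProd_apply]
    simp
  have himg : L '' {p : ℝ × ℝ | p.1^2 + p.2^2 ≤ 1} = {p : ℝ × ℝ | p.1^2 / a^2 + p.2^2 / b^2 ≤ 1} := by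
    ext ⟨u, v⟩
    simp only [mem_image, mem_setOf_eq]
    constructor
    · rintro ⟨⟨x, y⟩, hxy, heq⟩
      rw [hLapp] at heq
      simp only [Prod.mk.injEq] at heq
      obtain ⟨h1, h2⟩ := heq
      subst h1; subst h2
      have : (a * x)^2 / a^2 = x^2 := by field_simp
      have h2 : (b * y)^2 / b^2 = y^2 := by field_simp
      simp only at hxy ⊢
      rw [this, h2]; exact hxy
    · intro h
      refine ⟨(u / a, v / b), ?_, ?_⟩
      · simp only [mem_setOf_eq]
        calc (u/a)^2 + (v/b)^2 = u^2/a^2 + v^2/b^2 := by ring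
        _ ≤ 1 := h
      · rw [hLapp]; simp only [Prod.mk.injEq]
        constructor <;> field_simp
  have hdet : LinearMap.det L = a * b := by
    rw [hL, LinearMap.det_toLin, Matrix.det_fin_two_of]
    ring
  have hdisk : volume {p : ℝ × ℝ | p.1^2 + p.2^2 ≤ 1} = ENNReal.ofReal π := by
    have hpre : Complex.measurableEquivRealProd ⁻¹' {p : ℝ × ℝ | p.1^2 + p.2^2 ≤ 1}
        = Metric.closedBall (0 : ℂ) 1 := by
      ext z
      simp only [mem_preimage, Complex.measurableEquivRealProd_apply, mem_setOf_eq,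
        Metric.mem_closedBall, dist_zero_right]
      have h2 : z.re^2 + z.im^2 = ‖z‖^2 := by
        rw [Complex.sq_norm, Complex.normSq_apply]; ring
      have h3 := norm_nonneg z
      constructor
      · intro h; nlinarith
      · intro h; nlinarith
    have := Complex.volume_preserving_equiv_real_prod.measure_preimage
      (s := {p : ℝ × ℝ | p.1^2 + p.2^2 ≤ 1}) ?_
    · rw [hpre, Complex.volume_closedBall] at this
      rw [← this]
      simp [ENNReal.ofReal_one]
      rw [← NNReal.coe_real_pi, ENNReal.ofReal_coe_nnreal]
    · refine (measurableSet_le (by fun_prop) measurable_const).nullMeasurableSet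
  rw [← himg, Measure.addHaar_image_linearMap, hdet, hdisk, abs_of_pos (by positivity),
    ← ENNReal.ofReal_mul (by positivity)]
  congr 1; ring

lemma aux_f_meas {a b ℰ : ℝ} (f : ℝ → ℝ)
    (hf : ∀ r : ℝ, f r = if r ≤ b then 2 * r / (a * b)
      else 4 * r / (π * a * b) * Real.arccos (Real.sqrt (r^2 - b^2) / (ℰ * r))) :
    Measurable f := by
  have hfe : f = fun r => if r ≤ b then 2 * r / (a * b)
      else 4 * r / (π * a * b) * Real.arccos (Real.sqrt (r^2 - b^2) / (ℰ * r)) := funext hf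
  rw [hfe]
  apply Measurable.ite (measurableSet_le measurable_id measurable_const)
  · fun_prop
  · apply Measurable.mul
    · fun_prop
    · exact Real.continuous_arccos.measurable.comp
        (Measurable.div (by fun_prop) (by fun_prop))

lemma aux_f_nonneg {a b ℰ : ℝ} (ha : 0 < a) (hb : 0 < b) (f : ℝ → ℝ)
    (hf : ∀ r : ℝ, f r = if r ≤ b then 2 * r / (a * b)
      else 4 * r / (π * a * b) * Real.arccos (Real.sqrt (r^2 - b^2) / (ℰ * r)))
    {r : ℝ} (hr : 0 ≤ r) : 0 ≤ f r := by
  rw [hf r]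
  split_ifs with h
  · positivity
  · have := Real.arccos_nonneg (Real.sqrt (r^2 - b^2) / (ℰ * r))
    have hpi := Real.pi_pos
    positivity

lemma aux_f_integrable {a b ℰ : ℝ} (hb : 0 < b) (hba : b < a) (f : ℝ → ℝ)
    (hf : ∀ r : ℝ, f r = if r ≤ b then 2 * r / (a * b)
      else 4 * r / (π * a * b) * Real.arccos (Real.sqrt (r^2 - b^2) / (ℰ * r)))
    {t : ℝ} (hta : t ≤ a) : IntegrableOn f (Ioc 0 t) volume := by
  have ha : 0 < a := hb.trans hba
  have hpi := Real.pi_pos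
  apply Measure.integrableOn_of_bounded (M := 2/a + 4/b) measure_Ioc_lt_top.ne
    (aux_f_meas f hf).aestronglyMeasurable
  filter_upwards [ae_restrict_mem measurableSet_Ioc] with r hr
  rw [Real.norm_eq_abs, abs_of_nonneg (aux_f_nonneg ha hb f hf hr.1.le)]
  rw [hf r]
  split_ifs with h
  · have h1 : 2 * r / (a * b) ≤ 2 * b / (a * b) := by gcongr
    have h2 : 2 * b / (a * b) = 2 / a := by field_simp
    have : (0:ℝ) < 4 / b := by positivity
    linarith
  · have harc1 := Real.arccos_le_pi (Real.sqrt (r^2 - b^2) / (ℰ * r))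
    have h1 : 4 * r / (π * a * b) * Real.arccos (Real.sqrt (r^2 - b^2) / (ℰ * r))
        ≤ 4 * r / (π * a * b) * π :=
      mul_le_mul_of_nonneg_left harc1 (div_nonneg (by linarith [hr.1]) (by positivity))
    have h2 : 4 * r / (π * a * b) * π = 4 * r / (a * b) := by field_simp
    have h3 : 4 * r / (a * b) ≤ 4 * a / (a * b) := by gcongr; linarith [hr.2]
    have h4 : 4 * a / (a * b) = 4 / b := by field_simp
    have : (0:ℝ) < 2 / a := by positivity
    linarith

set_option maxHeartbeats 1000000 in
lemma aux_key {a b : ℝ} (hb : 0 < b) (hba : b < a) {ℰ : ℝ} (hℰ : ℰ = Real.sqrt (1 - b^2/a^2))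
    (f : ℝ → ℝ)
    (hf : ∀ r : ℝ, f r = if r ≤ b then 2 * r / (a * b)
      else 4 * r / (π * a * b) * Real.arccos (Real.sqrt (r^2 - b^2) / (ℰ * r)))
    {t : ℝ} (ht0 : 0 ≤ t) (hta : t ≤ a) :
    volume ({p : ℝ × ℝ | p.1^2 / a^2 + p.2^2 / b^2 ≤ 1} ∩
        {p : ℝ × ℝ | Real.sqrt (p.1^2 + p.2^2) ≤ t})
      = ENNReal.ofReal (π * a * b * ∫ s in (0:ℝ)..t, f s) := by
  have ha : 0 < a := hb.trans hba
  have hpi := Real.pi_pos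
  set S : Set (ℝ × ℝ) := {p : ℝ × ℝ | p.1^2 / a^2 + p.2^2 / b^2 ≤ 1} ∩
      {p : ℝ × ℝ | Real.sqrt (p.1^2 + p.2^2) ≤ t} with hSdef
  have hSmeas : MeasurableSet S := by
    apply MeasurableSet.inter
    · exact measurableSet_le (by fun_prop) measurable_const
    · exact measurableSet_le
        ((continuous_sqrt.comp ((continuous_fst.pow 2).add (continuous_snd.pow 2))).measurable)
        measurable_const
  have hEpos : 0 < ℰ := by
    rw [hℰ]
    apply Real.sqrt_pos.2
    rw [sub_pos, div_lt_one (by positivity)]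
    nlinarith
  have hE2 : ℰ^2 = 1 - b^2/a^2 := by
    rw [hℰ, Real.sq_sqrt]
    rw [sub_nonneg, div_le_one (by positivity)]
    nlinarith
  have h0 : volume S = ∫⁻ p, S.indicator (fun _ => (1:ℝ≥0∞)) p :=
    (lintegral_indicator_one hSmeas).symm
  rw [h0, aux_lintegral_polar]
  have htarget : polarCoord.target = Ioi (0:ℝ) ×ˢ Ioo (-π) π := rfl
  have hFmeas : Measurable fun p : ℝ × ℝ =>
      ENNReal.ofReal p.1 * S.indicator (fun _ => (1:ℝ≥0∞)) (polarCoord.symm p) := by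
    apply Measurable.mul
    · exact ENNReal.measurable_ofReal.comp measurable_fst
    · apply (measurable_const.indicator hSmeas).comp
      have hcont : Continuous fun p : ℝ × ℝ => ((p.1 * Real.cos p.2, p.1 * Real.sin p.2) : ℝ × ℝ) := by
        fun_prop
      have : (⇑polarCoord.symm : ℝ × ℝ → ℝ × ℝ)
          = fun p : ℝ × ℝ => ((p.1 * Real.cos p.2, p.1 * Real.sin p.2) : ℝ × ℝ) :=
        funext fun p => polarCoord_symm_apply p
      rw [this]
      exact hcont.measurable
  rw [htarget, Measure.volume_eq_prod, ← Measure.prod_restrict,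
    lintegral_prod _ hFmeas.aemeasurable]
  simp only [polarCoord_symm_apply]
  have hrepl : ∀ r ∈ Ioi (0:ℝ),
      (∫⁻ θ in Ioo (-π) π,
        ENNReal.ofReal r * S.indicator (fun _ => (1:ℝ≥0∞)) (r * Real.cos θ, r * Real.sin θ))
      = (Ioc (0:ℝ) t).indicator (fun r => ENNReal.ofReal (π * a * b * f r)) r := by
    intro r hr
    have hr0 : 0 < r := hr
    have hsq : ∀ θ : ℝ, (r * Real.cos θ)^2 + (r * Real.sin θ)^2 = r^2 := by
      intro θ
      have h := Real.sin_sq_add_cos_sq θ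
      nlinarith [h]
    have hmem : ∀ θ : ℝ, ((r * Real.cos θ, r * Real.sin θ) ∈ S) ↔
        ((r * Real.cos θ)^2 / a^2 + (r * Real.sin θ)^2 / b^2 ≤ 1 ∧ r ≤ t) := by
      intro θ
      rw [hSdef]
      simp only [mem_inter_iff, mem_setOf_eq, hsq θ, Real.sqrt_sq hr0.le]
    rw [lintegral_const_mul' _ _ ENNReal.ofReal_ne_top]
    have hT : (fun θ : ℝ => S.indicator (fun _ => (1:ℝ≥0∞)) (r * Real.cos θ, r * Real.sin θ))
        = fun θ : ℝ =>
          ({θ : ℝ | (r * Real.cos θ, r * Real.sin θ) ∈ S}).indicator (fun _ => (1:ℝ≥0∞)) θ := by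
      funext θ
      simp only [Set.indicator_apply, mem_setOf_eq]
    rw [hT]
    have hTmeas : MeasurableSet {θ : ℝ | (r * Real.cos θ, r * Real.sin θ) ∈ S} := by
      have hc : Continuous fun θ : ℝ => ((r * Real.cos θ, r * Real.sin θ) : ℝ × ℝ) := by fun_prop
      exact hc.measurable hSmeas
    rw [lintegral_indicator hTmeas, setLIntegral_one, Measure.restrict_apply hTmeas]
    by_cases hrt : r ≤ t
    · rw [Set.indicator_of_mem (show r ∈ Ioc (0:ℝ) t from ⟨hr0, hrt⟩)]
      by_cases hrb : r ≤ b
      · have hset : {θ : ℝ | (r * Real.cos θ, r * Real.sin θ) ∈ S} ∩ Ioo (-π) π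
            = Ioo (-π) π := by
          apply inter_eq_self_of_subset_right
          intro θ _
          rw [mem_setOf_eq, hmem θ]
          refine ⟨?_, hrt⟩
          have h1 : (r * Real.cos θ)^2 / a^2 ≤ (r * Real.cos θ)^2 / b^2 :=
            div_le_div_of_nonneg_left (by positivity) (by positivity) (by nlinarith)
          calc (r * Real.cos θ)^2 / a^2 + (r * Real.sin θ)^2 / b^2
              ≤ (r * Real.cos θ)^2 / b^2 + (r * Real.sin θ)^2 / b^2 := by linarith
            _ = r^2 / b^2 := by rw [← add_div, hsq θ]
            _ ≤ 1 := by rw [div_le_one (by positivity)]; nlinarith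
        rw [hset, Real.volume_Ioo, ← ENNReal.ofReal_mul hr0.le]
        congr 1
        rw [hf r, if_pos hrb]
        field_simp
        ring
      · push_neg at hrb
        set c := Real.sqrt (r^2 - b^2) / (ℰ * r) with hc
        have hrb2 : b^2 < r^2 := by nlinarith
        have hra2 : r^2 ≤ a^2 := by nlinarith
        have h1ba : 0 < 1 - b^2/a^2 := by
          rw [sub_pos, div_lt_one (by positivity)]; nlinarith
        have hab2 : 0 < a^2 - b^2 := by nlinarith
        have hc0 : 0 < c := div_pos (Real.sqrt_pos.2 (by nlinarith)) (mul_pos hEpos hr0)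
        have hc2 : c^2 = ((r^2 - b^2) * a^2) / (r^2 * (a^2 - b^2)) := by
          rw [hc, div_pow, Real.sq_sqrt (by nlinarith), mul_pow, hE2,
            div_eq_div_iff (by positivity) (mul_pos (by positivity) hab2).ne']
          field_simp
        have hc1 : c ≤ 1 := by
          have hcsq : c^2 ≤ 1 := by
            rw [hc2, div_le_one (mul_pos (by positivity) hab2)]
            nlinarith
          nlinarith
        have hkey : ∀ θ : ℝ,
            ((r * Real.cos θ)^2 / a^2 + (r * Real.sin θ)^2 / b^2 ≤ 1) ↔ c ≤ |Real.cos θ| := by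
          intro θ
          have hs2 : Real.sin θ^2 = 1 - Real.cos θ^2 := by
            have := Real.sin_sq_add_cos_sq θ; linarith
          have habs : c ≤ |Real.cos θ| ↔ c^2 ≤ Real.cos θ^2 := by
            constructor
            · intro h
              have h2 := pow_le_pow_left₀ hc0.le h 2
              rwa [sq_abs] at h2
            · intro h
              have h2 : c^2 ≤ |Real.cos θ|^2 := by rwa [sq_abs]
              exact le_of_pow_le_pow_left₀ two_ne_zero (abs_nonneg _) h2
          have hXY : (r * Real.sin θ)^2 = r^2 * (1 - Real.cos θ^2) := by
            rw [mul_pow, hs2]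
          have hX : (r * Real.cos θ)^2 = r^2 * Real.cos θ^2 := by ring
          rw [hX, hXY, habs, hc2,
            div_add_div _ _ (by positivity : (a:ℝ)^2 ≠ 0) (by positivity : (b:ℝ)^2 ≠ 0),
            div_le_one (by positivity), div_le_iff₀ (mul_pos (by positivity) hab2)]
          constructor
          · intro h; nlinarith [h]
          · intro h; nlinarith [h]
        have hset : {θ : ℝ | (r * Real.cos θ, r * Real.sin θ) ∈ S} ∩ Ioo (-π) π
            = {θ : ℝ | θ ∈ Ioo (-π) π ∧ c ≤ |Real.cos θ|} := by
          ext θ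
          simp only [mem_inter_iff, mem_setOf_eq]
          rw [hmem θ, hkey θ]
          constructor
          · rintro ⟨⟨h1, _⟩, h3⟩; exact ⟨h3, h1⟩
          · rintro ⟨h3, h1⟩; exact ⟨⟨h1, hrt⟩, h3⟩
        rw [hset, aux_measure_cos_set hc0 hc1, ← ENNReal.ofReal_mul hr0.le]
        congr 1
        rw [hf r, if_neg (not_le.2 hrb), hc]
        field_simp
    · rw [Set.indicator_of_notMem (fun h => hrt h.2)]
      have hset : {θ : ℝ | (r * Real.cos θ, r * Real.sin θ) ∈ S} ∩ Ioo (-π) π = ∅ := by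
        apply eq_empty_iff_forall_notMem.2
        rintro θ ⟨h1, _⟩
        exact hrt ((hmem θ).1 h1).2
      rw [hset, measure_empty, mul_zero]
  rw [setLIntegral_congr_fun_ae measurableSet_Ioi (Filter.Eventually.of_forall hrepl)]
  have hInt : Integrable (fun r => π * a * b * f r) (volume.restrict (Ioc (0:ℝ) t)) :=
    (aux_f_integrable hb hba f hf hta).const_mul _
  have hnn : 0 ≤ᵐ[volume.restrict (Ioc (0:ℝ) t)] fun r => π * a * b * f r := by
    filter_upwards [ae_restrict_mem measurableSet_Ioc] with r hr
    exact mul_nonneg (by positivity) (aux_f_nonneg ha hb f hf hr.1.le)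
  rw [lintegral_indicator measurableSet_Ioc, Measure.restrict_restrict measurableSet_Ioc,
    inter_eq_self_of_subset_left Ioc_subset_Ioi_self,
    ← ofReal_integral_eq_lintegral_ofReal hInt hnn]
  congr 1
  rw [integral_const_mul, intervalIntegral.integral_of_le ht0]

theorem stmt_4 (a b : ℝ) (hb : 0 < b) (hba : b < a)
    (E : Set (ℝ × ℝ)) (hE : E = {p : ℝ × ℝ | p.1^2 / a^2 + p.2^2 / b^2 ≤ 1})
    (ℰ : ℝ) (hℰ : ℰ = Real.sqrt (1 - b^2 / a^2))
    (f : ℝ → ℝ)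
    (hf : ∀ r : ℝ, f r = if r ≤ b then 2 * r / (a * b)
      else 4 * r / (π * a * b) * Real.arccos (Real.sqrt (r^2 - b^2) / (ℰ * r))) :
    (∀ t ∈ Set.Icc (0:ℝ) a,
      (volume (E ∩ {p : ℝ × ℝ | Real.sqrt (p.1^2 + p.2^2) ≤ t})).toReal
        / (volume E).toReal = ∫ s in (0:ℝ)..t, f s) ∧
    (∫ s in (0:ℝ)..a, f s) = 1 := by
  have ha : 0 < a := hb.trans hba
  have hpi := Real.pi_pos
  have hpab : 0 < π * a * b := by positivity
  have hintnn : ∀ t : ℝ, 0 ≤ t → 0 ≤ ∫ s in (0:ℝ)..t, f s := by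
    intro t ht
    apply intervalIntegral.integral_nonneg ht
    intro u hu
    exact aux_f_nonneg ha hb f hf hu.1
  have hEsub : {p : ℝ × ℝ | p.1^2 / a^2 + p.2^2 / b^2 ≤ 1}
      ⊆ {p : ℝ × ℝ | Real.sqrt (p.1^2 + p.2^2) ≤ a} := by
    intro p hp
    rw [mem_setOf_eq] at hp ⊢
    have h1 : p.2^2 / a^2 ≤ p.2^2 / b^2 :=
      div_le_div_of_nonneg_left (by positivity) (by positivity) (by nlinarith)
    have h2 : (p.1^2 + p.2^2) / a^2 ≤ 1 := by
      rw [add_div]; linarith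
    have h3 : p.1^2 + p.2^2 ≤ a^2 := by
      rw [div_le_one (by positivity)] at h2; exact h2
    calc Real.sqrt (p.1^2 + p.2^2) ≤ Real.sqrt (a^2) := Real.sqrt_le_sqrt h3
      _ = a := Real.sqrt_sq ha.le
  have hvolEa : volume {p : ℝ × ℝ | p.1^2 / a^2 + p.2^2 / b^2 ≤ 1}
      = ENNReal.ofReal (π * a * b * ∫ s in (0:ℝ)..a, f s) := by
    rw [← inter_eq_self_of_subset_left hEsub]
    exact aux_key hb hba hℰ f hf ha.le (le_refl a)
  have hint1 : (∫ s in (0:ℝ)..a, f s) = 1 := by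
    have := (aux_volume_ellipse ha hb (a := a) (b := b)).symm.trans hvolEa
    rw [ENNReal.ofReal_eq_ofReal_iff hpab.le
      (mul_nonneg hpab.le (hintnn a ha.le))] at this
    have h2 : π * a * b * 1 = π * a * b * ∫ s in (0:ℝ)..a, f s := by rw [mul_one]; exact this
    exact (mul_left_cancel₀ hpab.ne' h2).symm
  refine ⟨?_, hint1⟩
  intro t ht
  have hkey := aux_key hb hba hℰ f hf ht.1 ht.2
  rw [hE]
  rw [hkey, aux_volume_ellipse ha hb,
    ENNReal.toReal_ofReal (mul_nonneg hpab.le (hintnn t ht.1)),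
    ENNReal.toReal_ofReal hpab.le]
  exact mul_div_cancel_left₀ _ hpab.ne'
end

section
/- Prove that ∫₀^b (2r/(ab)) dr + ∫_b^a (4r/(πab))·arccos(√(r² − b²)/(ℰ r)) dr = 1, where ℰ = √(1 − b²/a²) and 0 < b < a. -/
open Real
set_option maxHeartbeats 1000000

lemma aux_key_s5 (a b ℰ : ℝ) (hb : 0 < b) (hba : b < a) (hE : 0 < ℰ)
    (hE2 : ℰ^2 * a^2 = a^2 - b^2) :
    ∫ r in b..a, r * Real.arccos (Real.sqrt (r^2 - b^2) / (ℰ * r))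
      = π * b * (a - b) / 4 := by
  have ha : 0 < a := hb.trans hba
  have hab2 : 0 < a^2 - b^2 := by nlinarith
  set F : ℝ → ℝ := fun r => r^2/2 * Real.arccos (Real.sqrt (r^2 - b^2) / (ℰ * r))
      + a*b/4 * Real.arcsin ((2*r^2 - a^2 - b^2)/(a^2 - b^2)) with hF
  have hEa : ℰ * a = Real.sqrt (a^2 - b^2) := by
    rw [← hE2, show ℰ^2 * a^2 = (ℰ*a)^2 by ring, Real.sqrt_sq (by positivity)]
  -- continuity of g
  have hcontg : ContinuousOn (fun r => Real.sqrt (r^2 - b^2) / (ℰ * r)) (Set.Icc b a) := by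
    apply ContinuousOn.div
    · exact (Real.continuous_sqrt.comp (by continuity)).continuousOn
    · exact (continuous_const.mul continuous_id).continuousOn
    · intro x hx
      have : 0 < x := lt_of_lt_of_le hb hx.1
      positivity
  have hc1 : ContinuousOn (fun r : ℝ => r^2/2 * Real.arccos (Real.sqrt (r^2 - b^2) / (ℰ * r)))
      (Set.Icc b a) := ((continuous_id.pow 2).div_const 2).continuousOn.mul
        (Real.continuous_arccos.comp_continuousOn hcontg)
  have hc2 : Continuous (fun r : ℝ => a*b/4 * Real.arcsin ((2*r^2 - a^2 - b^2)/(a^2 - b^2))) := by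
    apply continuous_const.mul
    apply Real.continuous_arcsin.comp
    apply Continuous.div_const
    continuity
  have hcontF : ContinuousOn F (Set.Icc b a) := by
    rw [hF]; exact hc1.add hc2.continuousOn
  have hcontf : ContinuousOn (fun r => r * Real.arccos (Real.sqrt (r^2 - b^2) / (ℰ * r)))
      (Set.Icc b a) := continuous_id.continuousOn.mul
        (Real.continuous_arccos.comp_continuousOn hcontg)
  have hint : IntervalIntegrable (fun r => r * Real.arccos (Real.sqrt (r^2 - b^2) / (ℰ * r)))
      MeasureTheory.volume b a := by
    apply ContinuousOn.intervalIntegrable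
    rwa [Set.uIcc_of_le hba.le]
  have hderiv : ∀ r ∈ Set.Ioo b a, HasDerivAt F
      (r * Real.arccos (Real.sqrt (r^2 - b^2) / (ℰ * r))) r := by
    intro r hr
    rw [hF]
    obtain ⟨hrb, hra⟩ := hr
    have hr0 : 0 < r := hb.trans hrb
    have hs2pos : 0 < r^2 - b^2 := by nlinarith
    have ht2pos : 0 < a^2 - r^2 := by nlinarith
    set s := Real.sqrt (r^2 - b^2) with hsdef
    set t := Real.sqrt (a^2 - r^2) with htdef
    have hs : 0 < s := Real.sqrt_pos.mpr hs2pos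
    have ht : 0 < t := Real.sqrt_pos.mpr ht2pos
    have hs2 : s^2 = r^2 - b^2 := Real.sq_sqrt hs2pos.le
    have ht2 : t^2 = a^2 - r^2 := Real.sq_sqrt ht2pos.le
    -- g r value bounds
    have hglt : s / (ℰ * r) < 1 := by
      rw [div_lt_one (by positivity)]
      have h1 : a^2 * s^2 < (ℰ*r)^2 * a^2 := by
        nlinarith [hs2, hE2, mul_pos (mul_pos (sub_pos.mpr hra) (by positivity : (0:ℝ) < a + r))
          (by positivity : (0:ℝ) < b^2)]
      have hsq : s^2 < (ℰ*r)^2 := by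
        have := (mul_lt_mul_iff_of_pos_right (by positivity : (0:ℝ) < a^2)).mp
          (by linarith [h1] : s^2 * a^2 < (ℰ*r)^2 * a^2)
        exact this
      exact lt_of_pow_lt_pow_left₀ 2 (by positivity) hsq
    have hgpos : 0 < s / (ℰ * r) := by positivity
    -- derivative of s(r)
    have hds : HasDerivAt (fun x => Real.sqrt (x^2 - b^2)) (2*r / (2*s)) r := by
      have : HasDerivAt (fun x : ℝ => x^2 - b^2) (2*r) r := by
        simpa using (hasDerivAt_pow 2 r).sub_const (b^2)
      exact this.sqrt hs2pos.ne'
    -- derivative of g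
    have hdg : HasDerivAt (fun x => Real.sqrt (x^2 - b^2) / (ℰ * x))
        ((2*r / (2*s) * (ℰ*r) - s * ℰ) / (ℰ*r)^2) r := by
      have hlin : HasDerivAt (fun x : ℝ => ℰ * x) ℰ r := by
        simpa using (hasDerivAt_id r).const_mul ℰ
      exact hds.div hlin (by positivity)
    -- arccos composition
    have hdac : HasDerivAt (fun x => Real.arccos (Real.sqrt (x^2 - b^2) / (ℰ * x)))
        (-(1 / Real.sqrt (1 - (s/(ℰ*r))^2)) * ((2*r / (2*s) * (ℰ*r) - s * ℰ) / (ℰ*r)^2)) r := by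
      have := (Real.hasDerivAt_arccos (x := s/(ℰ*r)) (by linarith) hglt.ne).comp r hdg
      simpa [hsdef, Function.comp_def] using this
    -- first summand
    have hd1 : HasDerivAt (fun x => x^2/2 * Real.arccos (Real.sqrt (x^2 - b^2) / (ℰ * x)))
        (r * Real.arccos (s/(ℰ*r)) + r^2/2 *
          (-(1 / Real.sqrt (1 - (s/(ℰ*r))^2)) * ((2*r / (2*s) * (ℰ*r) - s * ℰ) / (ℰ*r)^2))) r := by
      have hp : HasDerivAt (fun x : ℝ => x^2/2) r r := by
        simpa using (hasDerivAt_pow 2 r).div_const 2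
      simpa [hsdef, Pi.mul_def] using hp.mul hdac
    -- arcsin part
    have hhb : (2*r^2 - a^2 - b^2)/(a^2 - b^2) ≠ -1 := by
      rw [ne_eq, div_eq_iff hab2.ne']
      intro h; nlinarith
    have hht : (2*r^2 - a^2 - b^2)/(a^2 - b^2) ≠ 1 := by
      rw [ne_eq, div_eq_iff hab2.ne']
      intro h; nlinarith
    have hdh : HasDerivAt (fun x : ℝ => (2*x^2 - a^2 - b^2)/(a^2 - b^2))
        ((2*(2*r)) / (a^2 - b^2)) r := by
      have : HasDerivAt (fun x : ℝ => 2*x^2 - a^2 - b^2) (2*(2*r)) r := by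
        have := ((hasDerivAt_pow 2 r).const_mul 2).sub_const (a^2)
        simpa using this.sub_const (b^2)
      exact this.div_const _
    have hdas : HasDerivAt (fun x => a*b/4 * Real.arcsin ((2*x^2 - a^2 - b^2)/(a^2 - b^2)))
        (a*b/4 * ((1 / Real.sqrt (1 - ((2*r^2 - a^2 - b^2)/(a^2 - b^2))^2)) *
          ((2*(2*r)) / (a^2 - b^2)))) r := by
      exact ((Real.hasDerivAt_arcsin hhb hht).comp r hdh).const_mul _
    have hD := hd1.add hdas
    -- simplify the sqrt values
    have hu : Real.sqrt (1 - (s/(ℰ*r))^2) = b*t/(a*ℰ*r) := by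
      rw [show 1 - (s/(ℰ*r))^2 = (b*t/(a*ℰ*r))^2 by
        field_simp
        linear_combination r^2 * hE2 - a^2 * hs2 - b^2 * ht2]
      exact Real.sqrt_sq (by positivity)
    have hv : Real.sqrt (1 - ((2*r^2 - a^2 - b^2)/(a^2 - b^2))^2) = 2*s*t/(a^2 - b^2) := by
      rw [show 1 - ((2*r^2 - a^2 - b^2)/(a^2 - b^2))^2 = (2*s*t/(a^2 - b^2))^2 by
        field_simp
        linear_combination (-4*t^2) * hs2 + (-4*(r^2-b^2)) * ht2]
      exact Real.sqrt_sq (by positivity)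
    have hEq : r * Real.arccos (s/(ℰ*r)) + r^2/2 *
          (-(1 / Real.sqrt (1 - (s/(ℰ*r))^2)) * ((2*r / (2*s) * (ℰ*r) - s * ℰ) / (ℰ*r)^2))
        + a*b/4 * ((1 / Real.sqrt (1 - ((2*r^2 - a^2 - b^2)/(a^2 - b^2))^2)) *
          ((2*(2*r)) / (a^2 - b^2)))
        = r * Real.arccos (s/(ℰ*r)) := by
      rw [hu, hv]
      have key : r^2/2 * (-(1 / (b*t/(a*ℰ*r))) * ((2*r / (2*s) * (ℰ*r) - s * ℰ) / (ℰ*r)^2))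
          + a*b/4 * ((1 / (2*s*t/(a^2 - b^2))) * ((2*(2*r)) / (a^2 - b^2))) = 0 := by
        field_simp
        linear_combination (4*r*a) * hs2
      linarith [key]
    exact hEq ▸ hD
  rw [intervalIntegral.integral_eq_sub_of_hasDerivAt_of_le hba.le hcontF hderiv hint]
  -- evaluate endpoints
  have hga : Real.sqrt (a^2 - b^2) / (ℰ * a) = 1 := by
    rw [hEa]; exact div_self (by rw [← hEa]; positivity)
  have hgb : Real.sqrt (b^2 - b^2) / (ℰ * b) = 0 := by
    simp
  have hha : (2*a^2 - a^2 - b^2)/(a^2 - b^2) = 1 := by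
    rw [div_eq_one_iff_eq hab2.ne']; ring
  have hhb : (2*b^2 - a^2 - b^2)/(a^2 - b^2) = -1 := by
    rw [div_eq_iff hab2.ne']; ring
  rw [hF]
  simp only [hga, hgb, hha, hhb, Real.arccos_one, Real.arccos_zero, Real.arcsin_one,
    Real.arcsin_neg_one]
  ring

theorem stmt_5 (a b : ℝ) (hb : 0 < b) (hba : b < a)
    (ℰ : ℝ) (hℰ : ℰ = Real.sqrt (1 - b^2 / a^2)) :
    (∫ r in (0:ℝ)..b, 2 * r / (a * b)) +
      (∫ r in b..a, 4 * r / (π * a * b) *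
        Real.arccos (Real.sqrt (r^2 - b^2) / (ℰ * r))) = 1 := by
  have ha : 0 < a := hb.trans hba
  have h1 : 0 < 1 - b^2/a^2 := by
    rw [sub_pos, div_lt_one (by positivity)]; nlinarith
  have hE : 0 < ℰ := by rw [hℰ]; positivity
  have hE2 : ℰ^2 * a^2 = a^2 - b^2 := by
    rw [hℰ, Real.sq_sqrt h1.le]; field_simp
  have hI1 : (∫ r in (0:ℝ)..b, 2 * r / (a * b)) = b / a := by
    simp only [show ∀ r : ℝ, 2 * r / (a * b) = (2 / (a*b)) * r by intro r; ring]
    rw [intervalIntegral.integral_const_mul, integral_id]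
    field_simp; ring
  have hI2 : (∫ r in b..a, 4 * r / (π * a * b) *
      Real.arccos (Real.sqrt (r^2 - b^2) / (ℰ * r))) = (a - b) / a := by
    have : ∀ r : ℝ, 4 * r / (π * a * b) * Real.arccos (Real.sqrt (r^2 - b^2) / (ℰ * r))
        = (4 / (π * a * b)) * (r * Real.arccos (Real.sqrt (r^2 - b^2) / (ℰ * r))) := by
      intro r; ring
    simp only [this]
    rw [intervalIntegral.integral_const_mul, aux_key_s5 a b ℰ hb hba hE hE2]
    have hπ : (0:ℝ) < π := Real.pi_pos
    field_simp
  rw [hI1, hI2]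
  field_simp
  ring
end

section
/- For a point uniform on the ellipse with semi-axes a ≥ b centered at the origin and transmitter at altitude H, the CDF of the Euclidean distance on the outer branch is F_d(d) = [2(d² − H²)√(1 − ℰ²) arccos(√(d² − b² − H²)/(ℰ√(d² − H²))) + 2b² arcsin(√((1 − ℰ²)(d² − b² − H²))/(bℰ))]/(π a b √(1 − ℰ²)) for √(b² + H²) < d ≤ √(a² + H²); in particular F_d(√(a² + H²)) = 1. -/
open Real MeasureTheory

open intervalIntegral in
lemma integ_one_sub_sq {u v : ℝ} (h1 : -1 ≤ u) (huv : u ≤ v) (h2 : v ≤ 1) :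
    ∫ x in u..v, Real.sqrt (1 - x^2) =
      (Real.arcsin v + v * Real.sqrt (1 - v^2)) / 2
        - (Real.arcsin u + u * Real.sqrt (1 - u^2)) / 2 := by
  have hcont : Continuous fun x : ℝ => Real.sqrt (1 - x^2) :=
    (continuous_const.sub (continuous_pow 2)).sqrt
  have hG : ContinuousOn (fun x : ℝ => (Real.arcsin x + x * Real.sqrt (1 - x^2)) / 2)
      (Set.Icc u v) :=
    ((Real.continuous_arcsin.add (continuous_id.mul hcont)).div_const 2).continuousOn
  have key : ∀ x ∈ Set.Ioo u v,
      HasDerivAt (fun x : ℝ => (Real.arcsin x + x * Real.sqrt (1 - x^2)) / 2)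
        (Real.sqrt (1 - x^2)) x := by
    intro x hx
    have hx1 : -1 < x := lt_of_le_of_lt h1 hx.1
    have hx2 : x < 1 := lt_of_lt_of_le hx.2 h2
    have hne : (1 : ℝ) - x^2 ≠ 0 := by nlinarith
    have hpos : 0 < 1 - x^2 := by nlinarith
    have hs : 0 < Real.sqrt (1 - x^2) := Real.sqrt_pos.2 hpos
    have hsq : Real.sqrt (1 - x^2) ^ 2 = 1 - x^2 := Real.sq_sqrt hpos.le
    have d1 : HasDerivAt Real.arcsin (1 / Real.sqrt (1 - x^2)) x :=
      Real.hasDerivAt_arcsin hx1.ne' hx2.ne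
    have d2 : HasDerivAt (fun x : ℝ => 1 - x^2) (-(2*x^1)) x :=
      (hasDerivAt_pow 2 x).const_sub 1
    have d3 : HasDerivAt (fun x : ℝ => Real.sqrt (1 - x^2))
        (1 / (2 * Real.sqrt (1 - x^2)) * (-(2*x^1))) x :=
      (Real.hasDerivAt_sqrt hne).comp x d2
    have d4 : HasDerivAt (fun x : ℝ => x * Real.sqrt (1 - x^2))
        (1 * Real.sqrt (1 - x^2) + x * (1 / (2 * Real.sqrt (1 - x^2)) * (-(2*x^1)))) x :=
      (hasDerivAt_id x).mul d3
    have := ((d1.add d4).div_const 2)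
    convert this using 1
    · rfl
    · rfl
    · rfl
    have : Real.sqrt (1 - x^2) * Real.sqrt (1 - x^2) = 1 - x^2 := by
      nlinarith [hsq]
    field_simp
    nlinarith [hsq, hs]
  rw [intervalIntegral.integral_eq_sub_of_hasDeriv_right_of_le huv hG
    (fun x hx => (key x hx).hasDerivWithinAt) (hcont.intervalIntegrable u v)]

lemma integ_sq_sub_sq {c u v : ℝ} (hc : 0 < c) (h1 : -c ≤ u) (huv : u ≤ v) (h2 : v ≤ c) :
    ∫ x in u..v, Real.sqrt (c^2 - x^2) =
      c^2 * ((Real.arcsin (v/c) + (v/c) * Real.sqrt (1 - (v/c)^2)) / 2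
        - (Real.arcsin (u/c) + (u/c) * Real.sqrt (1 - (u/c)^2)) / 2) := by
  have hcne : c ≠ 0 := hc.ne'
  have h1' : (-1 : ℝ) ≤ u / c := by rw [neg_le, ← neg_div]; exact (div_le_one hc).2 (by linarith)
  have h2' : v / c ≤ 1 := (div_le_one hc).2 h2
  have huv' : u / c ≤ v / c := by gcongr
  have hrw : ∀ x : ℝ, Real.sqrt (c^2 - x^2) = c * Real.sqrt (1 - (x/c)^2) := by
    intro x
    have : c^2 - x^2 = c^2 * (1 - (x/c)^2) := by field_simp
    rw [this, Real.sqrt_mul (sq_nonneg c), Real.sqrt_sq hc.le]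
  simp_rw [hrw]
  rw [intervalIntegral.integral_const_mul]
  rw [show (fun x : ℝ => Real.sqrt (1 - (x/c)^2)) = fun x : ℝ => (fun y : ℝ => Real.sqrt (1 - y^2)) (x / c) from rfl]
  rw [intervalIntegral.integral_comp_div (fun y : ℝ => Real.sqrt (1 - y^2)) hcne]
  rw [integ_one_sub_sq h1' huv' h2']
  simp only [smul_eq_mul]
  ring

lemma graph_null {f : ℝ → ℝ} (hf : Measurable f) :
    volume {p : ℝ × ℝ | p.2 = f p.1} = 0 := by
  rw [Measure.volume_eq_prod ℝ ℝ, Measure.prod_apply (measurableSet_graph hf)]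
  have : ∀ x : ℝ, (Prod.mk x ⁻¹' {p : ℝ × ℝ | p.2 = f p.1}) = {f x} := by
    intro x; ext y; simp [Set.mem_preimage]
  simp [this]

set_option maxHeartbeats 2000000 in
lemma area_inter {a b r : ℝ} (hb : 0 < b) (hba : b < a) (hbr : b < r) (hra : r ≤ a) :
    volume {p : ℝ × ℝ | p.1^2/a^2 + p.2^2/b^2 ≤ 1 ∧ p.1^2 + p.2^2 ≤ r^2}
      = ENNReal.ofReal (2*r^2 *
          Real.arccos (a * Real.sqrt (r^2-b^2) / (r * Real.sqrt (a^2-b^2)))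
        + 2*a*b * Real.arcsin (Real.sqrt (r^2-b^2) / Real.sqrt (a^2-b^2))) := by
  have ha : 0 < a := hb.trans hba
  have hr : 0 < r := hb.trans hbr
  have ha2 : (0:ℝ) < a^2 := by positivity
  set hel : ℝ → ℝ := fun x => Real.sqrt (b^2 * (a^2 - x^2) / a^2) with hhel
  set hcr : ℝ → ℝ := fun x => Real.sqrt (r^2 - x^2) with hhcr
  set h : ℝ → ℝ := fun x => min (hel x) (hcr x) with hh
  have helc : Continuous hel :=
    ((continuous_const.mul (continuous_const.sub (continuous_pow 2))).div_const _).sqrt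
  have hcrc : Continuous hcr := (continuous_const.sub (continuous_pow 2)).sqrt
  have hc : Continuous h := helc.min hcrc
  have hnn : ∀ x, 0 ≤ h x := fun x => le_min (Real.sqrt_nonneg _) (Real.sqrt_nonneg _)
  set S : Set (ℝ × ℝ) := {p : ℝ × ℝ | p.1^2/a^2 + p.2^2/b^2 ≤ 1 ∧ p.1^2 + p.2^2 ≤ r^2} with hS
  set R : Set (ℝ × ℝ) := regionBetween (fun x => - h x) h (Set.Ioo (-r) r) with hR
  have hRS : R ⊆ S := by
    rintro ⟨x, y⟩ ⟨hx, hy⟩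
    simp only [Set.mem_Ioo] at hx hy
    have hxr : x^2 < r^2 := sq_lt_sq' hx.1 hx.2
    have hxa : x^2 < a^2 := by nlinarith
    have hy' : |y| ≤ h x := abs_le.2 ⟨by linarith [hy.1], hy.2.le⟩
    have hy2 : y^2 ≤ (h x)^2 := by
      rw [← sq_abs]; exact pow_le_pow_left₀ (abs_nonneg y) hy' 2
    have hel2 : (hel x)^2 = b^2 * (a^2 - x^2) / a^2 :=
      Real.sq_sqrt (div_nonneg (mul_nonneg (sq_nonneg b) (by linarith)) ha2.le)
    have hcr2 : (hcr x)^2 = r^2 - x^2 := Real.sq_sqrt (by nlinarith)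
    have hmin1 : (h x)^2 ≤ (hel x)^2 := pow_le_pow_left₀ (hnn x) (min_le_left _ _) 2
    have hmin2 : (h x)^2 ≤ (hcr x)^2 := pow_le_pow_left₀ (hnn x) (min_le_right _ _) 2
    have hyel : y^2 * a^2 ≤ b^2 * (a^2 - x^2) := by
      have : y^2 ≤ b^2 * (a^2 - x^2) / a^2 := by rw [← hel2]; exact hy2.trans hmin1
      exact (le_div_iff₀ ha2).1 this
    constructor
    · show x^2/a^2 + y^2/b^2 ≤ 1
      rw [div_add_div _ _ (by positivity) (by positivity), div_le_one (by positivity)]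
      nlinarith
    · show x^2 + y^2 ≤ r^2
      nlinarith [hy2.trans hmin2]
  have hSRN : S ⊆ R ∪ ({p : ℝ × ℝ | p.2 = h p.1} ∪ {p : ℝ × ℝ | p.2 = -h p.1}) := by
    rintro ⟨x, y⟩ ⟨h1, h2⟩
    simp only [Set.mem_setOf_eq] at h1 h2
    have hxa : x^2 ≤ a^2 := by
      by_contra hcon
      push_neg at hcon
      have : 1 < x^2/a^2 := (one_lt_div (by positivity)).2 hcon
      nlinarith [div_nonneg (sq_nonneg y) (sq_nonneg b)]
    have hxr : x^2 ≤ r^2 := by nlinarith [sq_nonneg y]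
    have h1' : x^2 * b^2 + a^2 * y^2 ≤ a^2 * b^2 := by
      have := h1
      rw [div_add_div _ _ (by positivity) (by positivity), div_le_one (by positivity)] at this
      linarith [this]
    have hyel : y^2 ≤ b^2 * (a^2 - x^2) / a^2 := by
      rw [le_div_iff₀ ha2]; nlinarith
    have hycr : y^2 ≤ r^2 - x^2 := by linarith
    have hyh : |y| ≤ h x := by
      apply le_min
      · rw [← Real.sqrt_sq_eq_abs]; exact Real.sqrt_le_sqrt hyel
      · rw [← Real.sqrt_sq_eq_abs]; exact Real.sqrt_le_sqrt hycr
    rcases eq_or_lt_of_le hyh with heq | hlt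
    · right
      rcases abs_choice y with hy | hy
      · left; simp only [Set.mem_setOf_eq]; rw [← hy, heq]
      · right; simp only [Set.mem_setOf_eq]; rw [← neg_eq_iff_eq_neg, ← hy, heq]
    · left
      have hhx : 0 < h x := lt_of_le_of_lt (abs_nonneg y) hlt
      have hcrx : 0 < hcr x := lt_of_lt_of_le hhx (min_le_right _ _)
      have hx2 : x^2 < r^2 := by
        have := Real.sqrt_pos.1 hcrx
        linarith
      have hxabs : |x| < r := by
        rw [← Real.sqrt_sq_eq_abs, ← Real.sqrt_sq hr.le]
        exact Real.sqrt_lt_sqrt (sq_nonneg x) hx2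
      exact ⟨Set.mem_Ioo.2 (abs_lt.1 hxabs), (abs_lt.1 hlt).1, (abs_lt.1 hlt).2⟩
  have hvol : volume S = volume R := by
    have hN : volume ({p : ℝ × ℝ | p.2 = h p.1} ∪ {p : ℝ × ℝ | p.2 = -h p.1}) = 0 :=
      le_antisymm (le_trans (measure_union_le _ _) (by
        rw [graph_null hc.measurable, (graph_null (f := fun x => -h x) hc.measurable.neg : volume {p : ℝ × ℝ | p.2 = -h p.1} = 0)]; simp)) zero_le
    refine le_antisymm ?_ (measure_mono hRS)
    calc volume S ≤ volume (R ∪ _) := measure_mono hSRN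
    _ ≤ volume R + _ := measure_union_le _ _
    _ = volume R := by rw [hN, add_zero]
  -- abbreviations
  set P := Real.sqrt (r^2 - b^2) with hP
  set Q := Real.sqrt (a^2 - r^2) with hQ
  set D := Real.sqrt (a^2 - b^2) with hD
  have hP2 : P^2 = r^2 - b^2 := Real.sq_sqrt (by nlinarith)
  have hQ2 : Q^2 = a^2 - r^2 := Real.sq_sqrt (by nlinarith)
  have hD2 : D^2 = a^2 - b^2 := Real.sq_sqrt (by nlinarith)
  have hPpos : 0 < P := Real.sqrt_pos.2 (by nlinarith)
  have hQnn : 0 ≤ Q := Real.sqrt_nonneg _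
  have hDpos : 0 < D := Real.sqrt_pos.2 (by nlinarith)
  set x₀ := a * P / D with hx₀
  have hx₀nn : 0 ≤ x₀ := by positivity
  have hx₀sq : x₀^2 = a^2 * (r^2-b^2) / (a^2-b^2) := by
    have : x₀^2 = a^2*P^2/D^2 := by rw [hx₀]; ring
    rw [this, hP2, hD2]
  have hx₀r : x₀ ≤ r := by
    have hsq : x₀^2 ≤ r^2 := by
      rw [hx₀sq, div_le_iff₀ (by nlinarith)]
      nlinarith
    calc x₀ = Real.sqrt (x₀^2) := (Real.sqrt_sq hx₀nn).symm
    _ ≤ Real.sqrt (r^2) := Real.sqrt_le_sqrt hsq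
    _ = r := Real.sqrt_sq hr.le
  have hx₀a : x₀ ≤ a := hx₀r.trans hra
  -- volume of R as integral
  have hIh : IntegrableOn h (Set.Ioo (-r) r) volume :=
    (hc.integrableOn_Icc).mono_set Set.Ioo_subset_Icc_self
  rw [hvol, hR, Measure.volume_eq_prod ℝ ℝ,
    volume_regionBetween_eq_integral (show IntegrableOn (fun x => -h x) (Set.Ioo (-r) r) volume from hIh.neg) hIh measurableSet_Ioo
      (fun x _ => by have := hnn x; show -h x ≤ h x; linarith)]
  congr 1
  have hintgrand : ∀ y : ℝ, (h - fun x => -h x) y = 2 * h y := fun y => by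
    simp [Pi.sub_apply, two_mul]
  simp_rw [hintgrand]
  rw [← MeasureTheory.integral_Ioc_eq_integral_Ioo,
    ← intervalIntegral.integral_of_le (by linarith : -r ≤ r)]
  have hii : ∀ u v : ℝ, IntervalIntegrable (fun x => 2 * h x) volume u v :=
    fun u v => (continuous_const.mul hc).intervalIntegrable u v
  rw [← intervalIntegral.integral_add_adjacent_intervals (hii (-r) (-x₀)) (hii (-x₀) r),
      ← intervalIntegral.integral_add_adjacent_intervals (hii (-x₀) x₀) (hii x₀ r)]
  -- min identifications
  have hminr : ∀ x : ℝ, x₀^2 ≤ x^2 → h x = hcr x := by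
    intro x hx
    apply min_eq_right
    apply Real.sqrt_le_sqrt
    rw [le_div_iff₀ ha2]
    rw [hx₀sq, div_le_iff₀ (by nlinarith : (0:ℝ) < a^2-b^2)] at hx
    nlinarith
  have hminl : ∀ x : ℝ, x^2 ≤ x₀^2 → h x = hel x := by
    intro x hx
    apply min_eq_left
    apply Real.sqrt_le_sqrt
    rw [div_le_iff₀ ha2]
    rw [hx₀sq, le_div_iff₀ (by nlinarith : (0:ℝ) < a^2-b^2)] at hx
    nlinarith
  have hc1 : ∫ x in (-r)..(-x₀), 2 * h x = ∫ x in (-r)..(-x₀), 2 * hcr x := by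
    apply intervalIntegral.integral_congr
    intro x hx
    rw [Set.uIcc_of_le (by linarith), Set.mem_Icc] at hx
    have : x₀^2 ≤ x^2 := by nlinarith
    show 2 * h x = 2 * hcr x
    rw [hminr x this]
  have hc2 : ∫ x in x₀..r, 2 * h x = ∫ x in x₀..r, 2 * hcr x := by
    apply intervalIntegral.integral_congr
    intro x hx
    rw [Set.uIcc_of_le (by linarith), Set.mem_Icc] at hx
    have : x₀^2 ≤ x^2 := by nlinarith
    show 2 * h x = 2 * hcr x
    rw [hminr x this]
  have hc3 : ∫ x in (-x₀)..x₀, 2 * h x = ∫ x in (-x₀)..x₀, 2 * hel x := by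
    apply intervalIntegral.integral_congr
    intro x hx
    rw [Set.uIcc_of_le (by linarith), Set.mem_Icc] at hx
    have : x^2 ≤ x₀^2 := by nlinarith
    show 2 * h x = 2 * hel x
    rw [hminl x this]
  rw [hc1, hc2, hc3]
  -- rewrite hel integrand
  have hel_eq : ∀ x : ℝ, 2 * hel x = (2*b/a) * Real.sqrt (a^2 - x^2) := by
    intro x
    rw [hhel]
    simp only
    rw [show b^2 * (a^2-x^2) / a^2 = (b/a)^2 * (a^2-x^2) by rw [div_pow]; ring,
      Real.sqrt_mul (sq_nonneg _), Real.sqrt_sq (by positivity)]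
    ring
  simp_rw [hel_eq, hhcr]
  simp_rw [intervalIntegral.integral_const_mul]
  rw [integ_sq_sub_sq ha (by linarith : -a ≤ -x₀) (by linarith) hx₀a,
    integ_sq_sub_sq hr (le_refl (-r)) (by linarith) (by linarith : -x₀ ≤ r),
    integ_sq_sub_sq hr (by linarith : -r ≤ x₀) hx₀r (le_refl r)]
  -- sqrt and arcsin simplifications
  have e1 : x₀/a = P/D := by rw [hx₀]; field_simp
  have e2 : x₀/r = a*P/(r*D) := by rw [hx₀]; ring
  have e3 : (r:ℝ)/r = 1 := div_self hr.ne'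
  have sq1 : Real.sqrt (1-(P/D)^2) = Q/D := by
    rw [show 1-(P/D)^2 = (Q/D)^2 by
      field_simp
      rw [hP2, hQ2, hD2]; ring]
    exact Real.sqrt_sq (by positivity)
  have sq2 : Real.sqrt (1-(a*P/(r*D))^2) = b*Q/(r*D) := by
    rw [show 1-(a*P/(r*D))^2 = (b*Q/(r*D))^2 by
      field_simp
      rw [hP2, hQ2, hD2]; ring]
    exact Real.sqrt_sq (by positivity)
  rw [Real.arccos_eq_pi_div_two_sub_arcsin]
  simp only [neg_div, e1, e2, e3, Real.arcsin_neg, neg_sq, neg_mul, neg_neg,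
    Real.arcsin_one, sq1, sq2, one_pow, sub_self, Real.sqrt_zero, mul_zero, mul_one]
  field_simp
  ring

lemma ellipse_sub {a b x y : ℝ} (hb : 0 < b) (hba : b < a)
    (h1 : x^2/a^2 + y^2/b^2 ≤ 1) : x^2 + y^2 ≤ a^2 := by
  have ha : 0 < a := hb.trans hba
  have hxa : x^2 ≤ a^2 := by
    by_contra hcon
    push_neg at hcon
    have : 1 < x^2/a^2 := (one_lt_div (by positivity)).2 hcon
    nlinarith [div_nonneg (sq_nonneg y) (sq_nonneg b)]
  have h1' : x^2*b^2 + a^2*y^2 ≤ a^2*b^2 := by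
    rw [div_add_div _ _ (by positivity) (by positivity), div_le_one (by positivity)] at h1
    linarith
  have key : a^2*(x^2+y^2) ≤ a^2*a^2 := by
    nlinarith [mul_nonneg (sub_nonneg.2 (le_of_lt (by nlinarith : b^2 < a^2)))
      (sub_nonneg.2 hxa)]
  exact (mul_le_mul_iff_right₀ (by positivity)).1 key

lemma vol_ellipse {a b : ℝ} (hb : 0 < b) (hba : b < a) :
    volume {p : ℝ × ℝ | p.1^2/a^2 + p.2^2/b^2 ≤ 1} = ENNReal.ofReal (π * a * b) := by
  have ha : 0 < a := hb.trans hba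
  have hD : (0:ℝ) < Real.sqrt (a^2-b^2) := Real.sqrt_pos.2 (by nlinarith)
  have hset : {p : ℝ × ℝ | p.1^2/a^2 + p.2^2/b^2 ≤ 1}
      = {p : ℝ × ℝ | p.1^2/a^2 + p.2^2/b^2 ≤ 1 ∧ p.1^2 + p.2^2 ≤ a^2} := by
    ext ⟨x, y⟩
    simp only [Set.mem_setOf_eq, iff_self_and]
    exact fun h1 => ellipse_sub hb hba h1
  rw [hset, area_inter hb hba hba (le_refl a)]
  rw [show a * Real.sqrt (a^2-b^2) / (a * Real.sqrt (a^2-b^2)) = 1 from div_self (by positivity),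
    show Real.sqrt (a^2-b^2) / Real.sqrt (a^2-b^2) = 1 from div_self hD.ne',
    Real.arccos_one, Real.arcsin_one]
  congr 1
  ring

theorem stmt_17 (a b H : ℝ) (hb : 0 < b) (hba : b < a) (hH : 0 < H)
    (ℰ : ℝ) (hℰ : ℰ = Real.sqrt (1 - b^2 / a^2))
    (E : Set (ℝ × ℝ)) (hE : E = {p : ℝ × ℝ | p.1^2 / a^2 + p.2^2 / b^2 ≤ 1})
    (F : ℝ → ℝ)
    (hF : ∀ d, F d =
      (volume (E ∩ {p : ℝ × ℝ | Real.sqrt (p.1^2 + p.2^2 + H^2) ≤ d})).toReal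
        / (volume E).toReal) :
    (∀ d ∈ Set.Ioc (Real.sqrt (b^2 + H^2)) (Real.sqrt (a^2 + H^2)),
      F d = (2 * (d^2 - H^2) * Real.sqrt (1 - ℰ^2) *
          Real.arccos (Real.sqrt (d^2 - b^2 - H^2) / (ℰ * Real.sqrt (d^2 - H^2))) +
          2 * b^2 * Real.arcsin (Real.sqrt ((1 - ℰ^2) * (d^2 - b^2 - H^2)) / (b * ℰ)))
        / (π * a * b * Real.sqrt (1 - ℰ^2))) ∧
    F (Real.sqrt (a^2 + H^2)) = 1 := by
  have ha : 0 < a := hb.trans hba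
  have hab2 : (0:ℝ) < a^2 - b^2 := by nlinarith
  have hDpos : (0:ℝ) < Real.sqrt (a^2-b^2) := Real.sqrt_pos.2 hab2
  have hvolE : volume E = ENNReal.ofReal (π*a*b) := by rw [hE]; exact vol_ellipse hb hba
  -- facts about ℰ
  have hb2a2 : b^2/a^2 < 1 := (div_lt_one (by positivity)).2 (by nlinarith)
  have hE2 : ℰ^2 = 1 - b^2/a^2 := by rw [hℰ]; exact Real.sq_sqrt (by linarith)
  have hEpos : 0 < ℰ := by rw [hℰ]; exact Real.sqrt_pos.2 (by linarith)
  have hEeq : ℰ = Real.sqrt (a^2-b^2) / a := by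
    rw [hℰ, show 1 - b^2/a^2 = (a^2-b^2)/a^2 by field_simp,
      Real.sqrt_div (by linarith) , Real.sqrt_sq ha.le]
  have h1E : Real.sqrt (1 - ℰ^2) = b/a := by
    rw [hE2, show 1-(1-b^2/a^2) = (b/a)^2 by rw [div_pow]; ring, Real.sqrt_sq (by positivity)]
  constructor
  · rintro d ⟨hd1, hd2⟩
    have hd0 : 0 < d := lt_trans (Real.sqrt_pos.2 (by positivity)) hd1
    have hbH : b^2 + H^2 < d^2 := (Real.sqrt_lt' hd0).1 hd1
    have hdaH : d^2 ≤ a^2 + H^2 := (Real.le_sqrt hd0.le (by positivity)).1 hd2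
    set r := Real.sqrt (d^2 - H^2) with hr
    have hr2 : r^2 = d^2 - H^2 := Real.sq_sqrt (by nlinarith)
    have hbr : b < r := by rw [hr]; exact (Real.lt_sqrt hb.le).2 (by nlinarith)
    have hra : r ≤ a := by
      have : r ≤ Real.sqrt (a^2) := Real.sqrt_le_sqrt (by nlinarith)
      rwa [Real.sqrt_sq ha.le] at this
    have hrpos : 0 < r := hb.trans hbr
    have hseteq : E ∩ {p : ℝ × ℝ | Real.sqrt (p.1^2 + p.2^2 + H^2) ≤ d}
        = {p : ℝ × ℝ | p.1^2/a^2 + p.2^2/b^2 ≤ 1 ∧ p.1^2 + p.2^2 ≤ r^2} := by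
      rw [hE]
      ext ⟨x, y⟩
      simp only [Set.mem_inter_iff, Set.mem_setOf_eq]
      apply and_congr_right'
      rw [Real.sqrt_le_iff]
      constructor
      · rintro ⟨-, hle⟩; rw [hr2]; linarith
      · intro hle
        refine ⟨hd0.le, ?_⟩
        rw [hr2] at hle; linarith
    have hPnn : (0:ℝ) ≤ Real.sqrt (r^2-b^2) := Real.sqrt_nonneg _
    rw [hF d, hseteq, area_inter hb hba hbr hra, hvolE,
      ENNReal.toReal_ofReal (add_nonneg
        (mul_nonneg (by positivity) (Real.arccos_nonneg _))
        (mul_nonneg (by positivity) (Real.arcsin_nonneg.2 (by positivity)))),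
      ENNReal.toReal_ofReal (by positivity)]
    -- identify the arguments
    have harg1 : Real.sqrt (d^2 - b^2 - H^2) / (ℰ * Real.sqrt (d^2-H^2))
        = a * Real.sqrt (r^2-b^2) / (r * Real.sqrt (a^2-b^2)) := by
      rw [← hr, show d^2 - b^2 - H^2 = r^2 - b^2 by rw [hr2]; ring, hEeq]
      field_simp
    have harg2 : Real.sqrt ((1-ℰ^2) * (d^2 - b^2 - H^2)) / (b * ℰ)
        = Real.sqrt (r^2-b^2) / Real.sqrt (a^2-b^2) := by
      rw [show d^2 - b^2 - H^2 = r^2 - b^2 by rw [hr2]; ring,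
        show (1-ℰ^2) = (b/a)^2 by rw [hE2, div_pow]; ring,
        Real.sqrt_mul (sq_nonneg _), Real.sqrt_sq (by positivity), hEeq]
      field_simp
    rw [harg1, harg2, h1E, ← hr2]
    field_simp
  · have hseteq : E ∩ {p : ℝ × ℝ | Real.sqrt (p.1^2 + p.2^2 + H^2) ≤ Real.sqrt (a^2+H^2)} = E := by
      apply Set.inter_eq_left.2
      intro p hp
      rw [hE] at hp
      simp only [Set.mem_setOf_eq] at hp ⊢
      apply Real.sqrt_le_sqrt
      have := ellipse_sub hb hba hp
      linarith
    rw [hF _, hseteq, hvolE, ENNReal.toReal_ofReal (by positivity)]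
    exact div_self (by positivity)
end
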